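/- arXiv:2509.16359 — 2 statements merged into one kernel-verified Lean document; each statement's English description precedes it below -/
import Mathlib

section
/- Fix c > 0 and suppose that (w_r · P̂[t])² ≤ c for every rank r = 1,…,R and every time t ∈ ℕ, t ≥ 1. Then the regret per sample vanishes asymptotically: limsup_{τ → ∞} [ (1/τ) L_u(τ) − (1/τ) min_{1 ≤ r ≤ R} ℓ_r(τ) ] ≤ 0. -/
/-- Euclidean inner product on `ℝ^R`. -/
noncomputable def dotp {R : ℕ} (w v : Fin R → ℝ) : ℝ := ∑ i, w i * v i

/-- Cumulative loss `ℓ_r(t) = Σ_{t'=1}^{t} (w_r · P̂[t'])²` (so `ℓ_r(0) = 0`). -/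
noncomputable def cumLoss {R : ℕ} (w : Fin R → Fin R → ℝ) (P : ℕ → Fin R → ℝ)
    (r : Fin R) (t : ℕ) : ℝ :=
  ∑ t' ∈ Finset.Icc 1 t, (dotp (w r) (P t')) ^ 2

/-- Blending weights `μ_r(t) = exp(−ℓ_r(t−1)/(2c)) / Σ_k exp(−ℓ_k(t−1)/(2c))`. -/
noncomputable def blendWeight {R : ℕ} (c : ℝ) (w : Fin R → Fin R → ℝ)
    (P : ℕ → Fin R → ℝ) (r : Fin R) (t : ℕ) : ℝ :=
  Real.exp (-cumLoss w P r (t - 1) / (2 * c)) /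
    ∑ k, Real.exp (-cumLoss w P k (t - 1) / (2 * c))

/-- Universal weight vector `w_u[t] = Σ_r μ_r(t) w_r`. -/
noncomputable def univWeight {R : ℕ} (c : ℝ) (w : Fin R → Fin R → ℝ)
    (P : ℕ → Fin R → ℝ) (t : ℕ) : Fin R → ℝ :=
  ∑ r, blendWeight c w P r t • w r

/-- Universal cumulative loss `L_u(τ) = Σ_{t=1}^{τ} (w_u[t] · P̂[t])²`. -/
noncomputable def univLoss {R : ℕ} (c : ℝ) (w : Fin R → Fin R → ℝ)
    (P : ℕ → Fin R → ℝ) (τ : ℕ) : ℝ :=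
  ∑ t ∈ Finset.Icc 1 τ, (dotp (univWeight c w P t) (P t)) ^ 2

/- ========== Auxiliary lemmas ========== -/

/-- The potential `W(τ) = Σ_k exp(−ℓ_k(τ)/(2c))`. -/
noncomputable def Wpot {R : ℕ} (c : ℝ) (w : Fin R → Fin R → ℝ)
    (P : ℕ → Fin R → ℝ) (τ : ℕ) : ℝ :=
  ∑ k, Real.exp (-cumLoss w P k τ / (2 * c))

lemma dotp_sum_smul {R : ℕ} (μ : Fin R → ℝ) (w : Fin R → Fin R → ℝ) (v : Fin R → ℝ) :
    dotp (∑ r, μ r • w r) v = ∑ r, μ r * dotp (w r) v := by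
  unfold dotp
  simp only [Finset.sum_apply, Pi.smul_apply, smul_eq_mul, Finset.sum_mul, Finset.mul_sum]
  rw [Finset.sum_comm]
  exact Finset.sum_congr rfl fun r _ => Finset.sum_congr rfl fun i _ => by ring

lemma Wpot_pos {R : ℕ} (hR : 1 ≤ R) (c : ℝ) (w : Fin R → Fin R → ℝ)
    (P : ℕ → Fin R → ℝ) (τ : ℕ) : 0 < Wpot c w P τ := by
  haveI : NeZero R := ⟨by omega⟩
  exact Finset.sum_pos (fun k _ => Real.exp_pos _) ⟨⟨0, by omega⟩, Finset.mem_univ _⟩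

lemma concave_g {c : ℝ} (hc : 0 < c) :
    ConcaveOn ℝ (Set.Icc (-Real.sqrt c) (Real.sqrt c))
      (fun x : ℝ => Real.exp (-x ^ 2 / (2 * c))) := by
  have hderiv : ∀ x : ℝ,
      HasDerivAt (fun x : ℝ => Real.exp (-x ^ 2 / (2 * c)))
        (Real.exp (-x ^ 2 / (2 * c)) * (-x / c)) x := by
    intro x
    have h1 : HasDerivAt (fun x : ℝ => -x ^ 2 / (2 * c)) (-x / c) x := by
      have : HasDerivAt (fun x : ℝ => -x ^ 2 / (2 * c)) (-((2 : ℕ) * x ^ (2 - 1)) / (2 * c)) x :=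
        ((hasDerivAt_pow 2 x).neg).div_const (2 * c)
      convert this using 1
      field_simp
      ring
    simpa using h1.exp
  apply concaveOn_of_hasDerivWithinAt2_nonpos (convex_Icc _ _)
    (f' := fun x => Real.exp (-x ^ 2 / (2 * c)) * (-x / c))
    (f'' := fun x => Real.exp (-x ^ 2 / (2 * c)) * (x ^ 2 / c ^ 2 - 1 / c))
  · exact Continuous.continuousOn (by fun_prop)
  · intro x _
    exact (hderiv x).hasDerivWithinAt
  · intro x _
    have h2 : HasDerivAt (fun x : ℝ => Real.exp (-x ^ 2 / (2 * c)) * (-x / c))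
        (Real.exp (-x ^ 2 / (2 * c)) * (-x / c) * (-x / c) +
          Real.exp (-x ^ 2 / (2 * c)) * (-1 / c)) x := by
      have hlin : HasDerivAt (fun x : ℝ => -x / c) (-1 / c) x := by
        simpa using ((hasDerivAt_id x).neg).div_const c
      exact (hderiv x).mul hlin
    have : Real.exp (-x ^ 2 / (2 * c)) * (-x / c) * (-x / c) +
        Real.exp (-x ^ 2 / (2 * c)) * (-1 / c) =
        Real.exp (-x ^ 2 / (2 * c)) * (x ^ 2 / c ^ 2 - 1 / c) := by ring
    rw [this] at h2
    exact h2.hasDerivWithinAt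
  · intro x hx
    rw [interior_Icc] at hx
    have hx2 : x ^ 2 ≤ c := by
      have h1 : |x| ≤ Real.sqrt c := abs_le.mpr ⟨hx.1.le, hx.2.le⟩
      calc x ^ 2 = |x| ^ 2 := (sq_abs x).symm
        _ ≤ Real.sqrt c ^ 2 := by
            exact pow_le_pow_left₀ (abs_nonneg x) h1 2
        _ = c := Real.sq_sqrt hc.le
    have : x ^ 2 / c ^ 2 - 1 / c ≤ 0 := by
      rw [sub_nonpos]
      rw [div_le_div_iff₀ (by positivity) hc]
      nlinarith
    exact mul_nonpos_of_nonneg_of_nonpos (Real.exp_pos _).le this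

lemma blend_sum {R : ℕ} (hR : 1 ≤ R) (c : ℝ) (w : Fin R → Fin R → ℝ)
    (P : ℕ → Fin R → ℝ) (t : ℕ) : ∑ r, blendWeight c w P r t = 1 := by
  unfold blendWeight
  rw [← Finset.sum_div]
  exact div_self (Wpot_pos hR c w P (t - 1)).ne'

lemma cumLoss_succ {R : ℕ} (w : Fin R → Fin R → ℝ) (P : ℕ → Fin R → ℝ)
    (r : Fin R) (n : ℕ) :
    cumLoss w P r (n + 1) = cumLoss w P r n + (dotp (w r) (P (n + 1))) ^ 2 := by
  unfold cumLoss
  rw [Finset.sum_Icc_succ_top (by omega : 1 ≤ n + 1)]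

lemma univLoss_succ {R : ℕ} (c : ℝ) (w : Fin R → Fin R → ℝ) (P : ℕ → Fin R → ℝ) (n : ℕ) :
    univLoss c w P (n + 1) =
      univLoss c w P n + (dotp (univWeight c w P (n + 1)) (P (n + 1))) ^ 2 := by
  unfold univLoss
  rw [Finset.sum_Icc_succ_top (by omega : 1 ≤ n + 1)]

/-- One-step potential decrease. -/
lemma Wpot_step {R : ℕ} (hR : 1 ≤ R) {c : ℝ} (hc : 0 < c)
    (w : Fin R → Fin R → ℝ) (P : ℕ → Fin R → ℝ)
    (hbound : ∀ r : Fin R, ∀ t : ℕ, 1 ≤ t → (dotp (w r) (P t)) ^ 2 ≤ c) (n : ℕ) :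
    Wpot c w P (n + 1) ≤
      Wpot c w P n *
        Real.exp (-(dotp (univWeight c w P (n + 1)) (P (n + 1))) ^ 2 / (2 * c)) := by
  set x : Fin R → ℝ := fun k => dotp (w k) (P (n + 1)) with hxdef
  have hWpos := Wpot_pos hR c w P n
  set μ : Fin R → ℝ := fun k => blendWeight c w P k (n + 1) with hμdef
  have hμ : ∀ k, μ k = Real.exp (-cumLoss w P k n / (2 * c)) / Wpot c w P n := by
    intro k; simp [hμdef, blendWeight, Wpot]
  -- Express W(n+1) via a convex combination
  have hne : Wpot c w P n ≠ 0 := hWpos.ne'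
  have hW1 : Wpot c w P (n + 1) =
      Wpot c w P n * ∑ k, μ k * Real.exp (-(x k) ^ 2 / (2 * c)) := by
    rw [Finset.mul_sum]
    show (∑ k, Real.exp (-cumLoss w P k (n + 1) / (2 * c))) = _
    refine Finset.sum_congr rfl fun k _ => ?_
    rw [cumLoss_succ, hμ k]
    rw [show Wpot c w P n * (Real.exp (-cumLoss w P k n / (2 * c)) / Wpot c w P n *
        Real.exp (-(x k) ^ 2 / (2 * c))) =
        Real.exp (-cumLoss w P k n / (2 * c)) * Real.exp (-(x k) ^ 2 / (2 * c)) from by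
      field_simp]
    rw [← Real.exp_add]
    congr 1
    ring
  -- Jensen
  have hmem : ∀ k : Fin R, x k ∈ Set.Icc (-Real.sqrt c) (Real.sqrt c) := by
    intro k
    have h1 : (x k) ^ 2 ≤ c := hbound k (n + 1) (by omega)
    have h2 : |x k| ≤ Real.sqrt c := by
      rw [← Real.sqrt_sq_eq_abs]
      exact Real.sqrt_le_sqrt h1
    exact abs_le.mp h2
  have hμnonneg : ∀ k : Fin R, 0 ≤ μ k := by
    intro k
    rw [hμ k]
    positivity
  have hμsum : ∑ k, μ k = 1 := blend_sum hR c w P (n + 1)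
  have hjensen := (concave_g hc).le_map_sum (t := Finset.univ) (w := μ) (p := x)
    (fun k _ => hμnonneg k) hμsum (fun k _ => hmem k)
  simp only [smul_eq_mul] at hjensen
  have hdot : dotp (univWeight c w P (n + 1)) (P (n + 1)) = ∑ k, μ k * x k := by
    unfold univWeight
    rw [dotp_sum_smul]
  rw [hW1, hdot]
  apply mul_le_mul_of_nonneg_left _ hWpos.le
  calc ∑ k, μ k * Real.exp (-(x k) ^ 2 / (2 * c))
      ≤ Real.exp (-(∑ k, μ k * x k) ^ 2 / (2 * c)) := hjensen
    _ = Real.exp (-(∑ k, μ k * x k) ^ 2 / (2 * c)) := rfl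

/-- Telescoped potential bound. -/
lemma Wpot_le {R : ℕ} (hR : 1 ≤ R) {c : ℝ} (hc : 0 < c)
    (w : Fin R → Fin R → ℝ) (P : ℕ → Fin R → ℝ)
    (hbound : ∀ r : Fin R, ∀ t : ℕ, 1 ≤ t → (dotp (w r) (P t)) ^ 2 ≤ c) (τ : ℕ) :
    Wpot c w P τ ≤ (R : ℝ) * Real.exp (-univLoss c w P τ / (2 * c)) := by
  induction τ with
  | zero =>
      have h0 : ∀ k : Fin R, cumLoss w P k 0 = 0 := by intro k; simp [cumLoss]
      have h1 : univLoss c w P 0 = 0 := by simp [univLoss]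
      simp [Wpot, h0, h1]
  | succ n ih =>
      calc Wpot c w P (n + 1)
          ≤ Wpot c w P n *
            Real.exp (-(dotp (univWeight c w P (n + 1)) (P (n + 1))) ^ 2 / (2 * c)) :=
            Wpot_step hR hc w P hbound n
        _ ≤ ((R : ℝ) * Real.exp (-univLoss c w P n / (2 * c))) *
            Real.exp (-(dotp (univWeight c w P (n + 1)) (P (n + 1))) ^ 2 / (2 * c)) := by
            apply mul_le_mul_of_nonneg_right ih (Real.exp_pos _).le
        _ = (R : ℝ) * Real.exp (-univLoss c w P (n + 1) / (2 * c)) := by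
            rw [univLoss_succ, mul_assoc, ← Real.exp_add]
            congr 2
            ring

/-- Regret bound: `L_u(τ) ≤ ⨅ ℓ_r(τ) + 2c log R`. -/
lemma univLoss_le {R : ℕ} (hR : 1 ≤ R) {c : ℝ} (hc : 0 < c)
    (w : Fin R → Fin R → ℝ) (P : ℕ → Fin R → ℝ)
    (hbound : ∀ r : Fin R, ∀ t : ℕ, 1 ≤ t → (dotp (w r) (P t)) ^ 2 ≤ c) (τ : ℕ) :
    univLoss c w P τ ≤ (⨅ r : Fin R, cumLoss w P r τ) + 2 * c * Real.log R := by
  haveI : NeZero R := ⟨by omega⟩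
  haveI : Nonempty (Fin R) := ⟨⟨0, by omega⟩⟩
  have key : ∀ r : Fin R,
      univLoss c w P τ - 2 * c * Real.log R ≤ cumLoss w P r τ := by
    intro r
    have h1 : Real.exp (-cumLoss w P r τ / (2 * c)) ≤ Wpot c w P τ := by
      unfold Wpot
      exact Finset.single_le_sum (f := fun k => Real.exp (-cumLoss w P k τ / (2 * c)))
        (fun k _ => (Real.exp_pos _).le) (Finset.mem_univ r)
    have h2 := h1.trans (Wpot_le hR hc w P hbound τ)
    have hRpos : (0 : ℝ) < R := by positivity
    rw [show (R : ℝ) * Real.exp (-univLoss c w P τ / (2 * c)) =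
        Real.exp (Real.log R + -univLoss c w P τ / (2 * c)) by
      rw [Real.exp_add, Real.exp_log hRpos]] at h2
    have h3 := Real.exp_le_exp.mp h2
    have h4 : (2 * c) * (-cumLoss w P r τ / (2 * c)) ≤
        (2 * c) * (Real.log R + -univLoss c w P τ / (2 * c)) := by
      apply mul_le_mul_of_nonneg_left h3 (by positivity)
    have hne : (2 : ℝ) * c ≠ 0 := by positivity
    have e1 : (2 * c) * (-cumLoss w P r τ / (2 * c)) = -cumLoss w P r τ := by field_simp
    have e2 : (2 * c) * (-univLoss c w P τ / (2 * c)) = -univLoss c w P τ := by field_simp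
    rw [mul_add, e1, e2] at h4
    linarith
  have := le_ciInf key
  linarith [this]

/-- Corollary of Theorem 1: if the squared filter outputs are uniformly bounded by `c`
for all times, the per-sample regret of the universal filter vanishes asymptotically. -/
theorem universalOSF_regret_vanishes {R : ℕ} (hR : 1 ≤ R) (c : ℝ) (hc : 0 < c)
    (w : Fin R → Fin R → ℝ) (P : ℕ → Fin R → ℝ)
    (hbound : ∀ r : Fin R, ∀ t : ℕ, 1 ≤ t → (dotp (w r) (P t)) ^ 2 ≤ c) :
    Filter.limsup
      (fun τ : ℕ =>
        (1 / (τ : ℝ)) * univLoss c w P τ - (1 / (τ : ℝ)) * ⨅ r : Fin R, cumLoss w P r τ)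
      Filter.atTop ≤ 0 := by
  haveI : Nonempty (Fin R) := ⟨⟨0, by omega⟩⟩
  set f : ℕ → ℝ := fun τ =>
    (1 / (τ : ℝ)) * univLoss c w P τ - (1 / (τ : ℝ)) * ⨅ r : Fin R, cumLoss w P r τ with hf
  set g : ℕ → ℝ := fun τ => (2 * c * Real.log R) * (1 / (τ : ℝ)) with hg
  have hfg : ∀ τ : ℕ, f τ ≤ g τ := by
    intro τ
    have h1 := univLoss_le hR hc w P hbound τ
    have h2 : (0 : ℝ) ≤ 1 / (τ : ℝ) := by positivity
    have := mul_le_mul_of_nonneg_left h1 h2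
    simp only [hf, hg]
    nlinarith [this]
  have hgtendsto : Filter.Tendsto g Filter.atTop (nhds 0) := by
    rw [hg]
    have := tendsto_one_div_atTop_nhds_zero_nat (𝕜 := ℝ)
    have h := this.const_mul (2 * c * Real.log R)
    simpa using h
  -- lower bound for coboundedness
  have hflb : ∀ᶠ τ : ℕ in Filter.atTop, -c ≤ f τ := by
    filter_upwards [Filter.eventually_ge_atTop 1] with τ hτ
    have hτpos : (0 : ℝ) < τ := by exact_mod_cast hτ
    have hL : 0 ≤ univLoss c w P τ := by
      apply Finset.sum_nonneg; intro t _; positivity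
    have hinf_nonneg : 0 ≤ ⨅ r : Fin R, cumLoss w P r τ := by
      apply le_ciInf; intro r
      apply Finset.sum_nonneg; intro t _; positivity
    have hinf_le : (⨅ r : Fin R, cumLoss w P r τ) ≤ c * τ := by
      obtain ⟨r⟩ := (inferInstance : Nonempty (Fin R))
      refine le_trans (ciInf_le (Finite.bddBelow_range _) r) ?_
      calc cumLoss w P r τ = ∑ t ∈ Finset.Icc 1 τ, (dotp (w r) (P t)) ^ 2 := rfl
        _ ≤ ∑ t ∈ Finset.Icc 1 τ, c := by
            apply Finset.sum_le_sum
            intro t ht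
            exact hbound r t (Finset.mem_Icc.mp ht).1
        _ = c * τ := by
            rw [Finset.sum_const, Nat.card_Icc]
            simp [mul_comm]
    have h1 : (1 / (τ : ℝ)) * (⨅ r : Fin R, cumLoss w P r τ) ≤ c := by
      rw [div_mul_eq_mul_div, one_mul, div_le_iff₀ hτpos]
      linarith [hinf_le]
    have h2 : 0 ≤ (1 / (τ : ℝ)) * univLoss c w P τ := by positivity
    simp only [hf]
    linarith
  have hcobdd : Filter.IsCoboundedUnder (· ≤ ·) Filter.atTop f :=
    Filter.isCoboundedUnder_le_of_eventually_le Filter.atTop hflb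
  have hbdd : Filter.IsBoundedUnder (· ≤ ·) Filter.atTop g :=
    hgtendsto.isBoundedUnder_le
  calc Filter.limsup f Filter.atTop
      ≤ Filter.limsup g Filter.atTop :=
        Filter.limsup_le_limsup (Filter.Eventually.of_forall hfg) hcobdd hbdd
    _ = 0 := hgtendsto.limsup_eq
end

section
/- Fix c > 0 and suppose that (w_r · P̂[t])² ≤ c for every rank r = 1,…,R and every time t = 1,…,τ. Then exp( −L_u(τ)/(2c) ) ≥ (1/R) Σ_{r=1}^{R} exp( −ℓ_r(τ)/(2c) ). In particular, the exponentiated cumulative loss of the universal filter dominates the uniform average of the exponentiated cumulative losses of the fixed-rank filters (p_u(P̂^τ) ≥ p_avg(P̂^τ)). -/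
/-- `x ↦ exp(-x²/(2c))` is concave on `[-√c, √c]`. -/
lemma gauss_concave (c : ℝ) (hc : 0 < c) :
    ConcaveOn ℝ (Set.Icc (-Real.sqrt c) (Real.sqrt c))
      (fun x => Real.exp (-x ^ 2 / (2 * c))) := by
  have hg : ∀ x : ℝ, HasDerivAt (fun x : ℝ => -x ^ 2 / (2 * c)) (-(2 * x ^ 1) / (2 * c)) x := by
    intro x
    simpa using ((hasDerivAt_pow 2 x).neg.div_const (2 * c))
  have h2 : ∀ x : ℝ, HasDerivAt (fun x : ℝ => -(2 * x ^ 1) / (2 * c)) (-(2 * 1) / (2 * c)) x := by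
    intro x
    simpa using (((hasDerivAt_pow 1 x).const_mul 2).neg.div_const (2 * c))
  apply concaveOn_of_hasDerivWithinAt2_nonpos
    (f' := fun x => Real.exp (-x ^ 2 / (2 * c)) * (-(2 * x ^ 1) / (2 * c)))
    (f'' := fun x => Real.exp (-x ^ 2 / (2 * c)) * (-(2 * x ^ 1) / (2 * c)) * (-(2 * x ^ 1) / (2 * c))
      + Real.exp (-x ^ 2 / (2 * c)) * (-(2 * 1) / (2 * c)))
    (convex_Icc _ _)
  · fun_prop
  · intro x _
    exact ((hg x).exp).hasDerivWithinAt
  · intro x _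
    exact (((hg x).exp).mul (h2 x)).hasDerivWithinAt
  · intro x hx
    rw [interior_Icc] at hx
    have hx2 : x ^ 2 < c := by
      have h1 : |x| < Real.sqrt c := abs_lt.mpr ⟨hx.1, hx.2⟩
      have h2 := mul_self_lt_mul_self (abs_nonneg x) h1
      rw [abs_mul_abs_self, Real.mul_self_sqrt hc.le] at h2
      nlinarith
    have hexp : (0:ℝ) < Real.exp (-x ^ 2 / (2 * c)) := Real.exp_pos _
    have hkey : Real.exp (-x ^ 2 / (2 * c)) * (-(2 * x ^ 1) / (2 * c)) * (-(2 * x ^ 1) / (2 * c))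
        + Real.exp (-x ^ 2 / (2 * c)) * (-(2 * 1) / (2 * c))
        = Real.exp (-x ^ 2 / (2 * c)) * ((x ^ 2 - c) / c ^ 2) := by
      field_simp
      ring
    rw [hkey]
    apply mul_nonpos_of_nonneg_of_nonpos hexp.le
    apply div_nonpos_of_nonpos_of_nonneg (by linarith) (by positivity)

/-- Linearity of `dotp` in the blended weight vector. -/
lemma dotp_univWeight {R : ℕ} (c : ℝ) (w : Fin R → Fin R → ℝ) (P : ℕ → Fin R → ℝ)
    (t : ℕ) (v : Fin R → ℝ) :
    dotp (univWeight c w P t) v = ∑ r, blendWeight c w P r t * dotp (w r) v := by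
  simp only [univWeight, dotp, Finset.sum_apply, Pi.smul_apply, smul_eq_mul,
    Finset.sum_mul, Finset.mul_sum]
  rw [Finset.sum_comm]
  exact Finset.sum_congr rfl fun r _ => Finset.sum_congr rfl fun i _ => by ring


/-- Central step of the appendix proof of Theorem 1: the exponentiated cumulative loss of
the universal filter dominates the uniform average of the exponentiated cumulative losses
of the fixed-rank filters, `p_u(P̂^τ) ≥ p_avg(P̂^τ)`. -/
theorem universalOSF_exp_loss_ge {R : ℕ} (hR : 1 ≤ R) (c : ℝ) (hc : 0 < c)
    (w : Fin R → Fin R → ℝ) (P : ℕ → Fin R → ℝ) (τ : ℕ)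
    (hbound : ∀ r : Fin R, ∀ t ∈ Finset.Icc 1 τ, (dotp (w r) (P t)) ^ 2 ≤ c) :
    (1 / (R : ℝ)) * ∑ r : Fin R, Real.exp (-cumLoss w P r τ / (2 * c)) ≤
      Real.exp (-univLoss c w P τ / (2 * c)) := by
  have hRpos : (0:ℝ) < R := by exact_mod_cast hR
  have : Nonempty (Fin R) := Fin.pos_iff_nonempty.mp hR
  have hne : (Finset.univ : Finset (Fin R)).Nonempty := Finset.univ_nonempty
  induction τ with
  | zero =>
      simp only [cumLoss, univLoss, Finset.Icc_self, Finset.Icc_eq_empty_of_lt Nat.zero_lt_one,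
        Finset.sum_empty, neg_zero, zero_div, Real.exp_zero, Finset.sum_const,
        Finset.card_univ, Fintype.card_fin, nsmul_eq_mul, mul_one]
      rw [one_div, inv_mul_cancel₀ hRpos.ne']
  | succ n ih =>
      -- abbreviations
      set x : Fin R → ℝ := fun r => dotp (w r) (P (n + 1)) with hxdef
      set μ : Fin R → ℝ := fun r => blendWeight c w P r (n + 1) with hμdef
      set S : ℕ → ℝ := fun t => ∑ r, Real.exp (-cumLoss w P r t / (2 * c)) with hSdef
      have hSpos : ∀ t, 0 < S t := fun t =>
        Finset.sum_pos (fun r _ => Real.exp_pos _) hne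
      have hmu : ∀ r, μ r = Real.exp (-cumLoss w P r n / (2 * c)) / S n := by
        intro r
        simp [hμdef, blendWeight, hSdef]
      have hbound' : ∀ r : Fin R, ∀ t ∈ Finset.Icc 1 n, (dotp (w r) (P t)) ^ 2 ≤ c := by
        intro r t ht
        refine hbound r t ?_
        rw [Finset.mem_Icc] at ht ⊢
        exact ⟨ht.1, ht.2.trans (Nat.le_succ n)⟩
      have ih' := ih hbound'
      have hxb : ∀ r, (x r) ^ 2 ≤ c :=
        fun r => hbound r (n + 1) (Finset.mem_Icc.mpr ⟨Nat.le_add_left 1 n, le_refl _⟩)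
      -- splitting the cumulative sums at time n+1
      have hsplit_r : ∀ r, cumLoss w P r (n + 1) = cumLoss w P r n + (x r) ^ 2 := by
        intro r
        simp [cumLoss, Finset.sum_Icc_succ_top (Nat.le_add_left 1 n), hxdef]
      have hsplit_u : univLoss c w P (n + 1)
          = univLoss c w P n + (dotp (univWeight c w P (n + 1)) (P (n + 1))) ^ 2 := by
        simp [univLoss, Finset.sum_Icc_succ_top (Nat.le_add_left 1 n)]
      -- the universal prediction is the μ-average of the per-rank predictions
      have hxu : dotp (univWeight c w P (n + 1)) (P (n + 1)) = ∑ r, μ r * x r :=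
        dotp_univWeight c w P (n + 1) (P (n + 1))
      -- μ is a probability vector
      have hμ0 : ∀ r ∈ Finset.univ, 0 ≤ μ r := by
        intro r _
        rw [hmu r]
        exact div_nonneg (Real.exp_pos _).le (hSpos n).le
      have hμ1 : ∑ r, μ r = 1 := by
        simp only [hmu]
        rw [← Finset.sum_div]
        exact div_self (hSpos n).ne'
      -- Jensen's inequality for the concave Gaussian kernel
      have hmem : ∀ r ∈ Finset.univ, x r ∈ Set.Icc (-Real.sqrt c) (Real.sqrt c) := by
        intro r _
        have habs : |x r| ≤ Real.sqrt c := by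
          have := Real.sqrt_le_sqrt (hxb r)
          rwa [Real.sqrt_sq_eq_abs] at this
        exact Set.mem_Icc.mpr (abs_le.mp habs)
      have hjensen : ∑ r, μ r * Real.exp (-(x r) ^ 2 / (2 * c))
          ≤ Real.exp (-(∑ r, μ r * x r) ^ 2 / (2 * c)) := by
        have := (gauss_concave c hc).le_map_sum hμ0 hμ1 hmem
        simpa [smul_eq_mul] using this
      -- evolution of the normalizer
      have hSnext : S (n + 1) = S n * ∑ r, μ r * Real.exp (-(x r) ^ 2 / (2 * c)) := by
        rw [Finset.mul_sum]
        refine Finset.sum_congr rfl fun r _ => ?_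
        rw [hmu r, hsplit_r r, neg_add, add_div, Real.exp_add]
        field_simp
        exact (div_self (hSpos n).ne').symm
      calc (1 / (R : ℝ)) * S (n + 1)
          = (1 / (R : ℝ) * S n) * ∑ r, μ r * Real.exp (-(x r) ^ 2 / (2 * c)) := by
            rw [hSnext]; ring
        _ ≤ (1 / (R : ℝ) * S n) * Real.exp (-(∑ r, μ r * x r) ^ 2 / (2 * c)) := by
            apply mul_le_mul_of_nonneg_left hjensen
            positivity
        _ ≤ Real.exp (-univLoss c w P n / (2 * c))
              * Real.exp (-(∑ r, μ r * x r) ^ 2 / (2 * c)) := by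
            exact mul_le_mul_of_nonneg_right ih' (Real.exp_pos _).le
        _ = Real.exp (-univLoss c w P (n + 1) / (2 * c)) := by
            rw [hsplit_u, hxu, neg_add, add_div, Real.exp_add]
end
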